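/- Let 1/3 < K < 1, μ = (3K−1)/(1−K), t₀ ∈ (0,1], and let w : (0,t₀] → ℝ be differentiable with w(t) ≠ 0 for all t ∈ (0,t₀] and satisfy the asymptotic ODE w'(t) = K μ t^{2μ−1} w(t) / (t^{2μ} + (1−K) w(t)²) on (0,t₀]. Then the function t ↦ |w(t)|^{1/(1−K)} · (t^{2μ} + w(t)²)^{−K/(2(1−K))} is constant on (0,t₀]. -/

import Mathlib

lemma abs_rpow_sq (x c : ℝ) : |x| ^ c = (x^2) ^ (c/2) := by
  rw [← sq_abs x, ← Real.rpow_natCast |x| 2, ← Real.rpow_mul (abs_nonneg x)]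
  congr 1
  ring

theorem stmt5 (K μ t₀ : ℝ) (hK : 1/3 < K) (hK' : K < 1)
    (hμ : μ = (3*K - 1)/(1 - K))
    (ht₀ : t₀ ∈ Set.Ioc (0:ℝ) 1)
    (w : ℝ → ℝ)
    (hw0 : ∀ t ∈ Set.Ioc (0:ℝ) t₀, w t ≠ 0)
    (hode : ∀ t ∈ Set.Ioc (0:ℝ) t₀,
      HasDerivAt w
        (K * μ * t ^ (2*μ - 1) * w t / (t ^ (2*μ) + (1 - K) * (w t)^2)) t) :
    ∀ t ∈ Set.Ioc (0:ℝ) t₀,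
      |w t| ^ ((1:ℝ)/(1 - K)) * (t ^ (2*μ) + (w t)^2) ^ (-(K/(2*(1 - K)))) =
      |w t₀| ^ ((1:ℝ)/(1 - K)) * (t₀ ^ (2*μ) + (w t₀)^2) ^ (-(K/(2*(1 - K)))) := by
  obtain ⟨ht₀0, ht₀1⟩ := ht₀
  have hK1 : (0:ℝ) < 1 - K := by linarith
  set a : ℝ := 1/(1-K) with ha
  set b : ℝ := K/(2*(1-K)) with hb
  set F : ℝ → ℝ := fun s => ((w s)^2)^(a/2) * (s^(2*μ) + (w s)^2)^(-b) with hF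
  have key : ∀ t ∈ Set.Ioc (0:ℝ) t₀, HasDerivAt F 0 t := by
    intro t ht
    obtain ⟨ht0, htt₀⟩ := ht
    have hwne := hw0 t ⟨ht0, htt₀⟩
    have hX : 0 < t ^ (2*μ) := Real.rpow_pos_of_pos ht0 _
    have hw2 : (0:ℝ) < (w t)^2 := by positivity
    have hS : 0 < t ^ (2*μ) + (w t)^2 := by positivity
    have hD : 0 < t ^ (2*μ) + (1-K) * (w t)^2 := by positivity
    set w' : ℝ := K * μ * t ^ (2*μ - 1) * w t / (t ^ (2*μ) + (1 - K) * (w t)^2) with hw'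
    have hw := hode t ⟨ht0, htt₀⟩
    have h1 : HasDerivAt (fun s => (w s)^2) (2 * w t * w') t := by
      have h := hw.fun_pow 2
      refine h.congr_deriv ?_
      rw [hw']
      push_cast
      ring
    have h2 : HasDerivAt (fun s : ℝ => s ^ (2*μ)) (2*μ * t ^ (2*μ - 1)) t := by
      simpa using Real.hasDerivAt_rpow_const (p := 2*μ) (Or.inl ht0.ne')
    have h3 : HasDerivAt (fun s => s ^ (2*μ) + (w s)^2)
        (2*μ * t ^ (2*μ - 1) + 2 * w t * w') t := h2.add h1
    have h4 : HasDerivAt (fun s => ((w s)^2)^(a/2))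
        ((a/2 * ((w t)^2)^(a/2 - 1)) * (2 * w t * w')) t :=
      by have := (Real.hasDerivAt_rpow_const (p := a/2) (Or.inl hw2.ne')).comp t h1; exact this
    have h5 : HasDerivAt (fun s => (s^(2*μ) + (w s)^2)^(-b))
        (((-b) * (t^(2*μ) + (w t)^2)^(-b - 1)) * (2*μ * t ^ (2*μ - 1) + 2 * w t * w')) t :=
      by have := (Real.hasDerivAt_rpow_const (p := -b) (Or.inl hS.ne')).comp t h3; exact this
    have h6 := h4.mul h5
    have e1 : ((w t)^2)^(a/2) = ((w t)^2)^(a/2-1) * (w t)^2 := by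
      nth_rewrite 1 [show a/2 = (a/2-1) + 1 by ring]
      rw [Real.rpow_add hw2, Real.rpow_one]
    have e2 : (t^(2*μ) + (w t)^2)^(-b) = (t^(2*μ) + (w t)^2)^(-b-1) * (t^(2*μ) + (w t)^2) := by
      nth_rewrite 1 [show -b = (-b-1) + 1 by ring]
      rw [Real.rpow_add hS, Real.rpow_one]
    have hzero : (a/2 * ((w t)^2)^(a/2 - 1)) * (2 * w t * w') * ((t^(2*μ) + (w t)^2)^(-b))
        + ((w t)^2)^(a/2) *
          (((-b) * (t^(2*μ) + (w t)^2)^(-b - 1)) * (2*μ * t ^ (2*μ - 1) + 2 * w t * w')) = 0 := by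
      rw [e1, e2, hw', ha, hb]
      field_simp
      ring
    exact hzero ▸ h6
  intro t ht
  obtain ⟨ht0, htt₀⟩ := ht
  have hsub : Set.Icc t t₀ ⊆ Set.Ioc (0:ℝ) t₀ := fun x hx => ⟨lt_of_lt_of_le ht0 hx.1, hx.2⟩
  have hcont : ContinuousOn F (Set.Icc t t₀) := fun x hx =>
    ((key x (hsub hx)).continuousAt).continuousWithinAt
  have hconst := constant_of_has_deriv_right_zero hcont
    (fun x hx => (key x (hsub ⟨hx.1, hx.2.le⟩)).hasDerivWithinAt)
  have h := hconst t₀ (Set.right_mem_Icc.mpr htt₀)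
  have lhs : |w t| ^ ((1:ℝ)/(1 - K)) * (t ^ (2*μ) + (w t)^2) ^ (-(K/(2*(1 - K)))) = F t := by
    rw [hF]; rw [abs_rpow_sq]
  have rhs : |w t₀| ^ ((1:ℝ)/(1 - K)) * (t₀ ^ (2*μ) + (w t₀)^2) ^ (-(K/(2*(1 - K)))) = F t₀ := by
    rw [hF]; rw [abs_rpow_sq]
  rw [lhs, rhs, h]
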